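/- For any two transformation data (f, γ₁, γ₂, γ₃) and (f̄, γ̄₁, γ̄₂, γ̄₃) and any differentiable A : ℝ → ℝ together with B, C₁, C₂ : ℝ → ℝ: applying the transformation rules (t1)–(t4) with (f, γ₁, γ₂, γ₃) and then applying them with (f̄, γ̄₁, γ̄₂, γ̄₃) produces the same quadruple of coefficient functions (including the kinetic coefficient B) as the single application with the composite datum (f̄∘f, γ̄₁∘f + γ₁, γ̄₂∘f + γ₂, γ̄₃∘f + γ₃); moreover the identity datum acts trivially. Hence the transformation rule (t2) for the kinetic coupling B, together with (t1), (t3), (t4), defines a consistent group action on quadruples (A, B, C₁, C₂). -/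

import Mathlib

/-- Transformation rule (t1) for the non-minimal coupling coefficient `A`:
`Ā(f x) = exp(−(n−2)·γ₁ x)·A x`. -/
noncomputable def transA (n : ℕ) (f : ℝ ≃ ℝ) (γ₁ A : ℝ → ℝ) : ℝ → ℝ :=
  fun y => Real.exp (-((n : ℝ) - 2) * γ₁ (f.symm y)) * A (f.symm y)

/-- Transformation rule (t3) for the coefficient `C₁`:
`C̄₁(f x)·f' x = exp(−(n−2)·γ₁ x)·(C₁ x + A x·((n−1)/2·γ₂' x + (n−3)/2·γ₃' x))`. -/
noncomputable def transC1 (n : ℕ) (f : ℝ ≃ ℝ) (γ₁ γ₂ γ₃ A C₁ : ℝ → ℝ) : ℝ → ℝ :=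
  fun y => Real.exp (-((n : ℝ) - 2) * γ₁ (f.symm y)) *
    (C₁ (f.symm y) + A (f.symm y) *
      (((n : ℝ) - 1) / 2 * deriv γ₂ (f.symm y) + ((n : ℝ) - 3) / 2 * deriv γ₃ (f.symm y)))
    / deriv (⇑f) (f.symm y)

/-- Transformation rule (t4) for the coefficient `C₂`:
`C̄₂(f x)·f' x = exp(−(n−2)·γ₁ x)·(C₂ x + A x·((n−1)·γ₂' x − γ₃' x))`. -/
noncomputable def transC2 (n : ℕ) (f : ℝ ≃ ℝ) (γ₁ γ₂ γ₃ A C₂ : ℝ → ℝ) : ℝ → ℝ :=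
  fun y => Real.exp (-((n : ℝ) - 2) * γ₁ (f.symm y)) *
    (C₂ (f.symm y) + A (f.symm y) *
      (((n : ℝ) - 1) * deriv γ₂ (f.symm y) - deriv γ₃ (f.symm y)))
    / deriv (⇑f) (f.symm y)

/-- Transformation rule (t2) for the kinetic coupling `B`:
`B̄(f x)·(f' x)² = exp(−(n−2)·γ₁ x)·( B x
  + (n−1)·( n·A·γ₂'·γ₃' − A·(γ₂')² − A·(γ₃')² + A'·(γ₂' + γ₃') − (n−2)·A·γ₁'·(γ₂' + γ₃') )
  + C₁·( −2n·γ₁' + 2(n+1)·γ₂' − 2·γ₃' ) + C₂·( 2·γ₁' − (n+3)·γ₂' + (n+1)·γ₃' ) )`. -/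
noncomputable def transB (n : ℕ) (f : ℝ ≃ ℝ) (γ₁ γ₂ γ₃ A B C₁ C₂ : ℝ → ℝ) : ℝ → ℝ :=
  fun y =>
    Real.exp (-((n : ℝ) - 2) * γ₁ (f.symm y)) *
      (B (f.symm y)
        + ((n : ℝ) - 1) *
          ((n : ℝ) * A (f.symm y) * deriv γ₂ (f.symm y) * deriv γ₃ (f.symm y)
            - A (f.symm y) * (deriv γ₂ (f.symm y)) ^ 2
            - A (f.symm y) * (deriv γ₃ (f.symm y)) ^ 2
            + deriv A (f.symm y) * (deriv γ₂ (f.symm y) + deriv γ₃ (f.symm y))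
            - ((n : ℝ) - 2) * A (f.symm y) * deriv γ₁ (f.symm y)
              * (deriv γ₂ (f.symm y) + deriv γ₃ (f.symm y)))
        + C₁ (f.symm y) * (-(2 * (n : ℝ)) * deriv γ₁ (f.symm y)
            + 2 * ((n : ℝ) + 1) * deriv γ₂ (f.symm y) - 2 * deriv γ₃ (f.symm y))
        + C₂ (f.symm y) * (2 * deriv γ₁ (f.symm y)
            - ((n : ℝ) + 3) * deriv γ₂ (f.symm y) + ((n : ℝ) + 1) * deriv γ₃ (f.symm y)))
      / (deriv (⇑f) (f.symm y)) ^ 2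

lemma hasDerivAt_equiv_symm (f : ℝ ≃ ℝ) (hf : Differentiable ℝ ⇑f)
    (hfs : Differentiable ℝ ⇑f.symm) (z : ℝ) :
    HasDerivAt (⇑f.symm) ((deriv (⇑f) (f.symm z))⁻¹) z := by
  have hs := (hfs z).hasDerivAt
  have hc : HasDerivAt (⇑f ∘ ⇑f.symm) (deriv (⇑f) (f.symm z) * deriv (⇑f.symm) z) z :=
    (hf (f.symm z)).hasDerivAt.comp z hs
  have hid : HasDerivAt (⇑f ∘ ⇑f.symm) 1 z := by
    have h : ⇑f ∘ ⇑f.symm = id := funext f.apply_symm_apply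
    rw [h]; exact hasDerivAt_id z
  have h1 : deriv (⇑f) (f.symm z) * deriv (⇑f.symm) z = 1 := hc.unique hid
  have h2 : deriv (⇑f.symm) z = (deriv (⇑f) (f.symm z))⁻¹ :=
    eq_inv_of_mul_eq_one_left (by rw [mul_comm]; exact h1)
  exact h2 ▸ hs

lemma deriv_transA (n : ℕ) (f : ℝ ≃ ℝ) (γ₁ A : ℝ → ℝ)
    (hf : Differentiable ℝ ⇑f) (hfs : Differentiable ℝ ⇑f.symm)
    (hγ₁ : Differentiable ℝ γ₁) (hA : Differentiable ℝ A) (z : ℝ) :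
    deriv (transA n f γ₁ A) z =
      Real.exp (-((n : ℝ) - 2) * γ₁ (f.symm z)) *
        (deriv A (f.symm z) - ((n : ℝ) - 2) * deriv γ₁ (f.symm z) * A (f.symm z)) *
        (deriv (⇑f) (f.symm z))⁻¹ := by
  have hs := hasDerivAt_equiv_symm f hf hfs z
  have h1 : HasDerivAt (fun w => γ₁ (f.symm w))
      (deriv γ₁ (f.symm z) * (deriv (⇑f) (f.symm z))⁻¹) z :=
    (hγ₁ (f.symm z)).hasDerivAt.comp z hs
  have h3 : HasDerivAt (fun w => A (f.symm w))
      (deriv A (f.symm z) * (deriv (⇑f) (f.symm z))⁻¹) z :=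
    (hA (f.symm z)).hasDerivAt.comp z hs
  have h4 : HasDerivAt (fun w => Real.exp (-((n : ℝ) - 2) * γ₁ (f.symm w)) * A (f.symm w))
      (Real.exp (-((n : ℝ) - 2) * γ₁ (f.symm z)) *
          (-((n : ℝ) - 2) * (deriv γ₁ (f.symm z) * (deriv (⇑f) (f.symm z))⁻¹)) * A (f.symm z)
        + Real.exp (-((n : ℝ) - 2) * γ₁ (f.symm z)) *
          (deriv A (f.symm z) * (deriv (⇑f) (f.symm z))⁻¹)) z :=
    ((h1.const_mul (-((n : ℝ) - 2))).exp).mul h3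
  have h5 : transA n f γ₁ A
      = fun w => Real.exp (-((n : ℝ) - 2) * γ₁ (f.symm w)) * A (f.symm w) := rfl
  rw [h5, h4.deriv]; ring

set_option maxHeartbeats 2000000 in
/-- The transformation rule (t2) for the kinetic coupling `B`, together with
(t1), (t3), (t4), defines a consistent group action on quadruples
`(A, B, C₁, C₂)`: applying the rules with `(f, γ₁, γ₂, γ₃)` and then with
`(f̄, γ̄₁, γ̄₂, γ̄₃)` agrees with the single application of the composite datum
`(f̄∘f, γ̄₁∘f + γ₁, γ̄₂∘f + γ₂, γ̄₃∘f + γ₃)`, and the identity datum acts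
trivially. -/
theorem transB_group_action (n : ℕ) (hn : 3 ≤ n)
    (f fb : ℝ ≃ ℝ) (γ₁ γ₂ γ₃ g₁ g₂ g₃ : ℝ → ℝ)
    (hf : Differentiable ℝ ⇑f) (hf' : ∀ x, deriv (⇑f) x ≠ 0)
    (hfsymm : Differentiable ℝ ⇑f.symm)
    (hfb : Differentiable ℝ ⇑fb) (hfb' : ∀ x, deriv (⇑fb) x ≠ 0)
    (hfbsymm : Differentiable ℝ ⇑fb.symm)
    (hγ₁ : Differentiable ℝ γ₁) (hγ₂ : Differentiable ℝ γ₂) (hγ₃ : Differentiable ℝ γ₃)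
    (hg₁ : Differentiable ℝ g₁) (hg₂ : Differentiable ℝ g₂) (hg₃ : Differentiable ℝ g₃)
    (A B C₁ C₂ : ℝ → ℝ) (hA : Differentiable ℝ A) :
    (transA n fb g₁ (transA n f γ₁ A) = transA n (f.trans fb) (g₁ ∘ ⇑f + γ₁) A ∧
      transB n fb g₁ g₂ g₃ (transA n f γ₁ A) (transB n f γ₁ γ₂ γ₃ A B C₁ C₂)
          (transC1 n f γ₁ γ₂ γ₃ A C₁) (transC2 n f γ₁ γ₂ γ₃ A C₂)
        = transB n (f.trans fb) (g₁ ∘ ⇑f + γ₁) (g₂ ∘ ⇑f + γ₂) (g₃ ∘ ⇑f + γ₃) A B C₁ C₂ ∧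
      transC1 n fb g₁ g₂ g₃ (transA n f γ₁ A) (transC1 n f γ₁ γ₂ γ₃ A C₁)
        = transC1 n (f.trans fb) (g₁ ∘ ⇑f + γ₁) (g₂ ∘ ⇑f + γ₂) (g₃ ∘ ⇑f + γ₃) A C₁ ∧
      transC2 n fb g₁ g₂ g₃ (transA n f γ₁ A) (transC2 n f γ₁ γ₂ γ₃ A C₂)
        = transC2 n (f.trans fb) (g₁ ∘ ⇑f + γ₁) (g₂ ∘ ⇑f + γ₂) (g₃ ∘ ⇑f + γ₃) A C₂) ∧
    (transA n (Equiv.refl ℝ) 0 A = A ∧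
      transB n (Equiv.refl ℝ) 0 0 0 A B C₁ C₂ = B ∧
      transC1 n (Equiv.refl ℝ) 0 0 0 A C₁ = C₁ ∧
      transC2 n (Equiv.refl ℝ) 0 0 0 A C₂ = C₂) := by

  have hexpsplit : ∀ a b : ℝ, Real.exp (-((n : ℝ) - 2) * (a + b))
      = Real.exp (-((n : ℝ) - 2) * a) * Real.exp (-((n : ℝ) - 2) * b) := by
    intro a b; rw [← Real.exp_add]; congr 1; ring
  constructor
  · have hcomp : ∀ x : ℝ, deriv (⇑fb ∘ ⇑f) x = deriv (⇑fb) (f x) * deriv (⇑f) x :=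
      fun x => deriv_comp x (hfb (f x)) (hf x)
    have hΓ : ∀ (g γ : ℝ → ℝ), Differentiable ℝ g → Differentiable ℝ γ →
        ∀ x : ℝ, deriv (g ∘ ⇑f + γ) x = deriv g (f x) * deriv (⇑f) x + deriv γ x := by
      intro g γ hg hγ x
      exact (((hg (f x)).hasDerivAt.comp x (hf x).hasDerivAt).add (hγ x).hasDerivAt).deriv
    have hdA := fun z => deriv_transA n f γ₁ A hf hfsymm hγ₁ hA z
    refine ⟨funext fun y => ?_, funext fun y => ?_, funext fun y => ?_, funext fun y => ?_⟩
    · simp only [transA, Equiv.symm_trans_apply, Pi.add_apply, Function.comp_apply,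
        Equiv.apply_symm_apply, hexpsplit]
      ring
    · simp only [transB, transC1, transC2, Equiv.symm_trans_apply, Equiv.coe_trans,
        Pi.add_apply, Function.comp_apply, Equiv.apply_symm_apply, hdA,
        hΓ g₁ γ₁ hg₁ hγ₁, hΓ g₂ γ₂ hg₂ hγ₂, hΓ g₃ γ₃ hg₃ hγ₃, hcomp]
      simp only [transA, Equiv.apply_symm_apply, hexpsplit]
      set z := fb.symm y with hz
      set x := f.symm z with hx
      have hFne := hf' x
      have hFbne := hfb' z
      set F := deriv (⇑f) x with hF
      set Fb := deriv (⇑fb) z with hFb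
      set e := Real.exp (-((n : ℝ) - 2) * γ₁ x) with he
      set E := Real.exp (-((n : ℝ) - 2) * g₁ z) with hE
      field_simp [hFne, hFbne]
      ring
    · simp only [transC1, Equiv.symm_trans_apply, Equiv.coe_trans,
        Pi.add_apply, Function.comp_apply, Equiv.apply_symm_apply,
        hΓ g₂ γ₂ hg₂ hγ₂, hΓ g₃ γ₃ hg₃ hγ₃, hcomp]
      simp only [transA, Equiv.apply_symm_apply, hexpsplit]
      set z := fb.symm y with hz
      set x := f.symm z with hx
      have hFne := hf' x
      have hFbne := hfb' z
      set F := deriv (⇑f) x with hF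
      set Fb := deriv (⇑fb) z with hFb
      set e := Real.exp (-((n : ℝ) - 2) * γ₁ x) with he
      set E := Real.exp (-((n : ℝ) - 2) * g₁ z) with hE
      field_simp [hFne, hFbne]
      ring
    · simp only [transC2, Equiv.symm_trans_apply, Equiv.coe_trans,
        Pi.add_apply, Function.comp_apply, Equiv.apply_symm_apply,
        hΓ g₂ γ₂ hg₂ hγ₂, hΓ g₃ γ₃ hg₃ hγ₃, hcomp]
      simp only [transA, Equiv.apply_symm_apply, hexpsplit]
      set z := fb.symm y with hz
      set x := f.symm z with hx
      have hFne := hf' x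
      have hFbne := hfb' z
      set F := deriv (⇑f) x with hF
      set Fb := deriv (⇑fb) z with hFb
      set e := Real.exp (-((n : ℝ) - 2) * γ₁ x) with he
      set E := Real.exp (-((n : ℝ) - 2) * g₁ z) with hE
      field_simp [hFne, hFbne]
      ring
  · have hz : deriv (0 : ℝ → ℝ) = fun _ => (0 : ℝ) := by
      funext t; exact deriv_const t 0
    refine ⟨funext fun y => ?_, funext fun y => ?_, funext fun y => ?_, funext fun y => ?_⟩ <;>
      simp [transA, transB, transC1, transC2, hz, deriv_id'']
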